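/- Let Λ be the Kronecker algebra over an algebraically closed field k and let B = P(I) for an infinite subset I ⊂ k. Then for every λ ∈ k ∪ {∞} there is a nonzero homomorphism from B to the simple regular module S_λ (where S_∞ is the representation k ⇉ k with maps 0 and identity). -/

import Mathlib

universe u

variable (k : Type u) [Field k]

/-- A representation of the Kronecker quiver `0 ⇉ 1`: two vector spaces and two
linear maps. -/
structure KronRep where
  V : Type u
  W : Type u
  [addV : AddCommGroup V]
  [addW : AddCommGroup W]
  [modV : Module k V]
  [modW : Module k W]
  a : V →ₗ[k] W
  b : V →ₗ[k] W

attribute [instance] KronRep.addV KronRep.addW KronRep.modV KronRep.modW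

variable {k}

/-- A morphism of Kronecker representations. -/
@[ext]
structure KronHom (M N : KronRep k) where
  φ : M.V →ₗ[k] N.V
  ψ : M.W →ₗ[k] N.W
  comm_a : N.a.comp φ = ψ.comp M.a
  comm_b : N.b.comp φ = ψ.comp M.b

/-- The zero morphism. -/
def KronHom.zero (M N : KronRep k) : KronHom M N :=
  ⟨0, 0, by simp, by simp⟩

/-- The identity morphism. -/
def KronHom.id (M : KronRep k) : KronHom M M :=
  ⟨LinearMap.id, LinearMap.id, by simp, by simp⟩

/-- `M` is the zero representation. -/
def KronRep.IsZeroRep (M : KronRep k) : Prop :=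
  Subsingleton M.V ∧ Subsingleton M.W

/-- `M` is indecomposable: it is nonzero and its endomorphism ring has no nontrivial
idempotents. -/
def KronRep.Indecomposable (M : KronRep k) : Prop :=
  ¬ M.IsZeroRep ∧ ∀ e : KronHom M M,
    e.φ.comp e.φ = e.φ → e.ψ.comp e.ψ = e.ψ → e = KronHom.zero M M ∨ e = KronHom.id M

/-- For Kronecker representations, the finite-dimensional indecomposable preprojective
modules are exactly the indecomposables of dimension vector `(n, n+1)`. -/
def KronRep.IsPreprojective (M : KronRep k) : Prop :=
  M.Indecomposable ∧ ∃ n : ℕ, Module.finrank k M.V = n ∧ Module.finrank k M.W = n + 1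

variable (k)

/-- The subspace `V(I) ⊆ k(T)` spanned by the elements `1/(T - λ)`, `λ ∈ I`. -/
noncomputable def VI (I : Set k) : Submodule k (RatFunc k) :=
  Submodule.span k ((fun l : k => (RatFunc.X - RatFunc.C l)⁻¹) '' I)

/-- The subspace `V(I) + k·1 ⊆ k(T)`. -/
noncomputable def WI (I : Set k) : Submodule k (RatFunc k) :=
  VI k I ⊔ Submodule.span k {1}

theorem mulX_mem (I : Set k) : ∀ v : RatFunc k, v ∈ VI k I →
    RatFunc.X * v ∈ WI k I := by
  intro v hv
  induction hv using Submodule.span_induction with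
  | mem x hx =>
      obtain ⟨l, hl, rfl⟩ := hx
      have hne : (RatFunc.X - RatFunc.C l : RatFunc k) ≠ 0 := by
        have h1 : (RatFunc.X - RatFunc.C l : RatFunc k)
            = algebraMap (Polynomial k) (RatFunc k) (Polynomial.X - Polynomial.C l) := by
          simp [RatFunc.algebraMap_X, RatFunc.algebraMap_C]
        rw [h1]
        exact RatFunc.algebraMap_ne_zero (Polynomial.X_sub_C_ne_zero l)
      have key : RatFunc.X * (RatFunc.X - RatFunc.C l)⁻¹
          = l • (RatFunc.X - RatFunc.C l)⁻¹ + 1 := by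
        rw [Algebra.smul_def]
        field_simp
        rw [RatFunc.algebraMap_eq_C]
        ring
      rw [key]
      refine add_mem ?_ ?_
      · exact Submodule.mem_sup_left (Submodule.smul_mem _ _
          (Submodule.subset_span ⟨l, hl, rfl⟩))
      · exact Submodule.mem_sup_right (Submodule.subset_span rfl)
  | zero => simpa using (WI k I).zero_mem
  | add x y hx hy ihx ihy => simpa [mul_add] using add_mem ihx ihy
  | smul c x hx ih => simpa [Algebra.mul_smul_comm] using (WI k I).smul_mem c ih

/-- Ringel's representation `P(I)`: the subrepresentation `(V(I) ⇉ V(I) + k·1)` of the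
generic representation `(k(T) ⇉ k(T))`, whose maps are the inclusion and
multiplication by `T`. -/
noncomputable def Prep (I : Set k) : KronRep k where
  V := VI k I
  W := WI k I
  a := Submodule.inclusion le_sup_left
  b := LinearMap.codRestrict (WI k I)
    ((LinearMap.mulLeft k (RatFunc.X : RatFunc k)).comp (VI k I).subtype)
    (fun v => mulX_mem k I v v.2)

/-- The simple regular representation `S_λ = (k ⇉ k)` with maps `id` and `λ·id`. -/
noncomputable def Slam (l : k) : KronRep k where
  V := k
  W := k
  a := LinearMap.id
  b := l • LinearMap.id

/-- The simple regular representation `S_∞ = (k ⇉ k)` with maps `0` and `id`. -/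
noncomputable def Sinf : KronRep k where
  V := k
  W := k
  a := 0
  b := LinearMap.id

section Aux

variable (I : Set k)

lemma XC_eq (l : k) : (RatFunc.X - RatFunc.C l : RatFunc k)
    = algebraMap (Polynomial k) (RatFunc k) (Polynomial.X - Polynomial.C l) := by
  simp [RatFunc.algebraMap_X, RatFunc.algebraMap_C]

lemma XC_ne_zero (l : k) : (RatFunc.X - RatFunc.C l : RatFunc k) ≠ 0 := by
  rw [XC_eq]
  exact RatFunc.algebraMap_ne_zero (Polynomial.X_sub_C_ne_zero l)

/-- `w` has no pole at `l`. -/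
def Good (l : k) (w : RatFunc k) : Prop :=
  Polynomial.eval₂ (RingHom.id k) l w.denom ≠ 0

variable {k}

lemma good_of_dvd {l : k} {w : RatFunc k} {q : Polynomial k} (h : w.denom ∣ q)
    (hq : Polynomial.eval₂ (RingHom.id k) l q ≠ 0) : Good k l w :=
  fun h0 => hq (Polynomial.eval₂_eq_zero_of_dvd_of_eval₂_eq_zero _ _ h h0)

lemma good_zero {l : k} : Good k l 0 := by
  rw [Good, RatFunc.denom_zero]
  simp

lemma good_algebraMap {l : k} (p : Polynomial k) :
    Good k l (algebraMap (Polynomial k) (RatFunc k) p) := by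
  rw [Good, RatFunc.denom_algebraMap]
  simp

lemma good_one {l : k} : Good k l 1 := by
  simpa using good_algebraMap (l := l) (1 : Polynomial k)

lemma good_C {l : k} (c : k) : Good k l (RatFunc.C c) := by
  rw [← RatFunc.algebraMap_C]
  exact good_algebraMap _

lemma good_X {l : k} : Good k l (RatFunc.X) := by
  rw [← RatFunc.algebraMap_X]
  exact good_algebraMap _

lemma good_add {l : k} {x y : RatFunc k} (hx : Good k l x) (hy : Good k l y) :
    Good k l (x + y) :=
  good_of_dvd (RatFunc.denom_add_dvd x y) (by rw [Polynomial.eval₂_mul]; exact mul_ne_zero hx hy)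

lemma good_mul {l : k} {x y : RatFunc k} (hx : Good k l x) (hy : Good k l y) :
    Good k l (x * y) :=
  good_of_dvd (RatFunc.denom_mul_dvd x y) (by rw [Polynomial.eval₂_mul]; exact mul_ne_zero hx hy)

lemma good_smul {l : k} {x : RatFunc k} (c : k) (hx : Good k l x) :
    Good k l (c • x) := by
  rw [RatFunc.smul_eq_C_mul]
  exact good_mul (good_C c) hx

lemma good_inv_XC {l m : k} (h : l ≠ m) : Good k l ((RatFunc.X - RatFunc.C m)⁻¹) := by
  have e : ((RatFunc.X - RatFunc.C m)⁻¹ : RatFunc k)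
      = algebraMap (Polynomial k) (RatFunc k) 1
        / algebraMap (Polynomial k) (RatFunc k) (Polynomial.X - Polynomial.C m) := by
    rw [map_one, one_div, XC_eq]
  refine good_of_dvd (q := Polynomial.X - Polynomial.C m) ?_ ?_
  · rw [e]; exact RatFunc.denom_div_dvd 1 _
  · simpa using sub_ne_zero_of_ne h

/-- Evaluation at `l`, composed with a linear map landing in functions regular at `l`,
is a linear functional. -/
noncomputable def evalOn (l : k) {M : Type u} [AddCommGroup M] [Module k M]
    (g : M →ₗ[k] RatFunc k) (hg : ∀ m, Good k l (g m)) : M →ₗ[k] k where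
  toFun m := RatFunc.eval (RingHom.id k) l (g m)
  map_add' x y := by
    show RatFunc.eval (RingHom.id k) l (g (x + y)) = _
    rw [map_add, RatFunc.eval_add _ _ (hg x) (hg y)]
  map_smul' c x := by
    show RatFunc.eval (RingHom.id k) l (g (c • x))
        = c • RatFunc.eval (RingHom.id k) l (g x)
    rw [map_smul, RatFunc.smul_eq_C_mul, RatFunc.eval_mul _ _ (good_C c) (hg x), RatFunc.eval_C,
      RingHom.id_apply, smul_eq_mul]

variable (k)

lemma WI_eq_span : WI k I = Submodule.span k
    (((fun m : k => (RatFunc.X - RatFunc.C m)⁻¹) '' I) ∪ {1}) := by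
  rw [WI, VI, Submodule.span_union]

variable {k I}

lemma good_of_memW {l : k} (hl : l ∉ I) {w : RatFunc k} (hw : w ∈ WI k I) : Good k l w := by
  rw [WI_eq_span] at hw
  induction hw using Submodule.span_induction with
  | mem x hx =>
      rcases hx with ⟨m, hm, rfl⟩ | rfl
      · exact good_inv_XC (fun h => hl (h ▸ hm))
      · exact good_one
  | zero => exact good_zero
  | add x y _ _ hx hy => exact good_add hx hy
  | smul c x _ hx => exact good_smul c hx

lemma good_res_of_memW (l : k) {w : RatFunc k} (hw : w ∈ WI k I) :
    Good k l ((RatFunc.X - RatFunc.C l) * w) := by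
  rw [WI_eq_span] at hw
  induction hw using Submodule.span_induction with
  | mem x hx =>
      rcases hx with ⟨m, hm, rfl⟩ | rfl
      · by_cases h : m = l
        · subst h
          rw [mul_inv_cancel₀ (XC_ne_zero k m)]
          exact good_one
        · exact good_mul (by rw [XC_eq]; exact good_algebraMap _) (good_inv_XC (Ne.symm h))
      · rw [mul_one, XC_eq]
        exact good_algebraMap _
  | zero => rw [mul_zero]; exact good_zero
  | add x y _ _ hx hy => rw [mul_add]; exact good_add hx hy
  | smul c x _ hx => rw [mul_smul_comm]; exact good_smul c hx

variable (k I)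

lemma memW_of_memV {v : RatFunc k} (hv : v ∈ VI k I) : v ∈ WI k I :=
  Submodule.mem_sup_left hv

lemma one_mem_WI : (1 : RatFunc k) ∈ WI k I :=
  Submodule.mem_sup_right (Submodule.mem_span_singleton_self 1)

/-- Evaluation at `l ∉ I` as a functional on `W(I)`. -/
noncomputable def psiA (l : k) (hl : l ∉ I) : (WI k I) →ₗ[k] k :=
  evalOn l ((WI k I).subtype) (fun w => good_of_memW hl w.2)

/-- The "residue at `l`" functional on `W(I)`. -/
noncomputable def psiB (l : k) : (WI k I) →ₗ[k] k :=
  evalOn l ((LinearMap.mulLeft k (RatFunc.X - RatFunc.C l)).comp (WI k I).subtype)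
    (fun w => good_res_of_memW l w.2)

lemma evalXC (l : k) : RatFunc.eval (RingHom.id k) l (RatFunc.X - RatFunc.C l) = 0 := by
  rw [XC_eq, RatFunc.eval_algebraMap]
  simp

/-- The homomorphism `P(I) → S_l` for `l ∉ I` (evaluation at `l`). -/
noncomputable def homA (l : k) (hl : l ∉ I) : KronHom (Prep k I) (Slam k l) where
  φ := (psiA k I l hl).comp (Prep k I).a
  ψ := psiA k I l hl
  comm_a := LinearMap.id_comp _
  comm_b := by
    apply LinearMap.ext; intro v
    show l • (RatFunc.eval (RingHom.id k) l (((WI k I).subtype) ((Prep k I).a v)))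
        = RatFunc.eval (RingHom.id k) l (((WI k I).subtype) ((Prep k I).b v))
    have ha : ((WI k I).subtype) ((Prep k I).a v) = v.1 := rfl
    have hb : ((WI k I).subtype) ((Prep k I).b v) = RatFunc.X * v.1 := rfl
    rw [ha, hb, RatFunc.eval_mul _ _ good_X (good_of_memW hl (memW_of_memV k I v.2)),
      RatFunc.eval_X, smul_eq_mul]

/-- The homomorphism `P(I) → S_l` given by the residue at `l`. -/
noncomputable def homB (l : k) : KronHom (Prep k I) (Slam k l) where
  φ := (psiB k I l).comp (Prep k I).a
  ψ := psiB k I l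
  comm_a := LinearMap.id_comp _
  comm_b := by
    apply LinearMap.ext; intro v
    show l • (RatFunc.eval (RingHom.id k) l
          ((RatFunc.X - RatFunc.C l) * (((WI k I).subtype) ((Prep k I).a v))))
        = RatFunc.eval (RingHom.id k) l
          ((RatFunc.X - RatFunc.C l) * (((WI k I).subtype) ((Prep k I).b v)))
    have ha : ((WI k I).subtype) ((Prep k I).a v) = v.1 := rfl
    have hb : ((WI k I).subtype) ((Prep k I).b v) = RatFunc.X * v.1 := rfl
    have hg : Good k l ((RatFunc.X - RatFunc.C l) * v.1) :=
      good_res_of_memW l (memW_of_memV k I v.2)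
    have key : (RatFunc.X - RatFunc.C l) * (RatFunc.X * v.1)
        = (RatFunc.X - RatFunc.C l) * ((RatFunc.X - RatFunc.C l) * v.1)
          + RatFunc.C l * ((RatFunc.X - RatFunc.C l) * v.1) := by ring
    have hXC : Good k l (RatFunc.X - RatFunc.C l) := by rw [XC_eq]; exact good_algebraMap _
    rw [ha, hb, key, RatFunc.eval_add _ _ (good_mul hXC hg) (good_mul (good_C l) hg),
      RatFunc.eval_mul _ _ hXC hg, RatFunc.eval_mul _ _ (good_C l) hg, RatFunc.eval_C, evalXC,
      RingHom.id_apply, zero_mul, zero_add, smul_eq_mul]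

variable {k I}

lemma intDegree_neg_of_memV {w : RatFunc k} (hw : w ∈ VI k I) :
    w = 0 ∨ w.intDegree < 0 := by
  induction hw using Submodule.span_induction with
  | mem x hx =>
      obtain ⟨m, -, rfl⟩ := hx
      right
      show ((RatFunc.X - RatFunc.C m : RatFunc k)⁻¹).intDegree < 0
      have h1 : (RatFunc.X - RatFunc.C m : RatFunc k).intDegree = 1 := by
        rw [XC_eq, RatFunc.intDegree_polynomial, Polynomial.natDegree_X_sub_C]
        rfl
      have h2 := RatFunc.intDegree_mul (XC_ne_zero k m) (inv_ne_zero (XC_ne_zero k m))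
      rw [mul_inv_cancel₀ (XC_ne_zero k m), RatFunc.intDegree_one, h1] at h2
      omega
  | zero => exact Or.inl rfl
  | add x y _ _ ihx ihy =>
      rcases ihx with rfl | ihx
      · simpa using ihy
      rcases ihy with rfl | ihy
      · rw [add_zero]; exact Or.inr ihx
      have hy0 : y ≠ 0 := fun h => by simp [h] at ihy
      by_cases hxy : x + y = 0
      · exact Or.inl hxy
      · exact Or.inr ((RatFunc.intDegree_add_le hy0 hxy).trans_lt (max_lt ihx ihy))
  | smul c x _ ihx =>
      by_cases hc : c = 0
      · exact Or.inl (by simp [hc])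
      rcases ihx with rfl | ihx
      · exact Or.inl (by simp)
      have hx0 : x ≠ 0 := fun h => by simp [h] at ihx
      have hC : (RatFunc.C c : RatFunc k) ≠ 0 := fun h =>
        hc (by simpa using congrArg (RatFunc.eval (RingHom.id k) 0) h)
      right
      rw [RatFunc.smul_eq_C_mul, RatFunc.intDegree_mul hC hx0, RatFunc.intDegree_C, zero_add]
      exact ihx

variable (k I)

lemma one_not_mem_VI : (1 : RatFunc k) ∉ VI k I := fun h => by
  rcases intDegree_neg_of_memV h with h0 | hlt
  · exact one_ne_zero h0
  · rw [RatFunc.intDegree_one] at hlt; exact lt_irrefl 0 hlt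

/-- `V(I)` as a submodule of `W(I)`. -/
noncomputable def Vsub : Submodule k (WI k I) := (VI k I).comap (WI k I).subtype

/-- The class of `1` in `W(I)/V(I)`. -/
noncomputable def qq : (WI k I) ⧸ Vsub k I :=
  Submodule.Quotient.mk ⟨1, one_mem_WI k I⟩

lemma qq_ne_zero : qq k I ≠ 0 := by
  intro h
  exact one_not_mem_VI k I ((Submodule.Quotient.mk_eq_zero (Vsub k I)).mp h)

lemma toSpan_bij : Function.Bijective (LinearMap.toSpanSingleton k _ (qq k I)) := by
  constructor
  · intro a b hab
    have h : (a - b) • qq k I = 0 := by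
      rw [sub_smul]
      rw [LinearMap.toSpanSingleton_apply, LinearMap.toSpanSingleton_apply] at hab
      rw [hab, sub_self]
    by_contra hne
    have hab0 : a - b ≠ 0 := sub_ne_zero.mpr hne
    exact qq_ne_zero k I (by rw [← inv_smul_smul₀ hab0 (qq k I), h, smul_zero])
  · intro x
    obtain ⟨w, rfl⟩ := Submodule.Quotient.mk_surjective _ x
    obtain ⟨v, hv, z, hz, hvz⟩ := Submodule.mem_sup.mp w.2
    obtain ⟨c, rfl⟩ := Submodule.mem_span_singleton.mp hz
    refine ⟨c, ?_⟩
    have hw : w = ⟨v, memW_of_memV k I hv⟩ + c • ⟨1, one_mem_WI k I⟩ := by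
      apply Subtype.ext
      simpa using hvz.symm
    have hv0 : Submodule.Quotient.mk (p := Vsub k I) ⟨v, memW_of_memV k I hv⟩ = 0 :=
      (Submodule.Quotient.mk_eq_zero _).mpr hv
    rw [LinearMap.toSpanSingleton_apply, hw, Submodule.Quotient.mk_add,
      Submodule.Quotient.mk_smul, hv0, zero_add]
    rfl

/-- The linear equivalence `k ≃ W(I)/V(I)`. -/
noncomputable def eInf : k ≃ₗ[k] ((WI k I) ⧸ Vsub k I) :=
  LinearEquiv.ofBijective (LinearMap.toSpanSingleton k _ (qq k I)) (toSpan_bij k I)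

/-- The homomorphism `P(I) → S_∞`. -/
noncomputable def homInf : KronHom (Prep k I) (Sinf k) where
  φ := ((eInf k I).symm.toLinearMap ∘ₗ (Vsub k I).mkQ) ∘ₗ (Prep k I).b
  ψ := (eInf k I).symm.toLinearMap ∘ₗ (Vsub k I).mkQ
  comm_a := by
    apply LinearMap.ext; intro v
    have h0 : (Vsub k I).mkQ ((Prep k I).a v) = 0 :=
      (Submodule.Quotient.mk_eq_zero _).mpr v.2
    show (Sinf k).a ((((eInf k I).symm.toLinearMap ∘ₗ (Vsub k I).mkQ) ∘ₗ (Prep k I).b) v) = (eInf k I).symm ((Vsub k I).mkQ ((Prep k I).a v))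
    rw [h0, map_zero]
    rfl
  comm_b := LinearMap.id_comp _

lemma homInf_psi_one : (homInf k I).ψ ⟨1, one_mem_WI k I⟩ = (1 : k) := by
  have h : (eInf k I) 1 = qq k I := by
    show LinearMap.toSpanSingleton k _ (qq k I) 1 = qq k I
    rw [LinearMap.toSpanSingleton_apply, one_smul]
  show (eInf k I).symm (qq k I) = 1
  rw [← h, LinearEquiv.symm_apply_apply]

end Aux

/-- For `B = P(I)` with `I ⊆ k` infinite, there is a nonzero homomorphism from `B` to
every simple regular representation `S_λ`, `λ ∈ k ∪ {∞}`. -/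
theorem exists_nonzero_hom_Prep_to_simple_regular
    [IsAlgClosed k] (I : Set k) (hI : I.Infinite) :
    (∀ l : k, ∃ f : KronHom (Prep k I) (Slam k l), f ≠ KronHom.zero _ _) ∧
    (∃ f : KronHom (Prep k I) (Sinf k), f ≠ KronHom.zero _ _) := by
  constructor
  · intro l
    by_cases hl : l ∈ I
    · refine ⟨homB k I l, fun hzero => ?_⟩
      have h1 : (homB k I l).φ ⟨(RatFunc.X - RatFunc.C l)⁻¹,
          Submodule.subset_span ⟨l, hl, rfl⟩⟩ = (1 : k) := by
        show RatFunc.eval (RingHom.id k) l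
            ((RatFunc.X - RatFunc.C l) * (RatFunc.X - RatFunc.C l)⁻¹) = 1
        rw [mul_inv_cancel₀ (XC_ne_zero k l), RatFunc.eval_one]
      rw [hzero] at h1
      exact one_ne_zero (α := k) h1.symm
    · refine ⟨homA k I l hl, fun hzero => ?_⟩
      have h1 : (homA k I l hl).ψ ⟨1, one_mem_WI k I⟩ = (1 : k) := by
        show RatFunc.eval (RingHom.id k) l (1 : RatFunc k) = 1
        exact RatFunc.eval_one _ _
      rw [hzero] at h1
      exact one_ne_zero (α := k) h1.symm
  · refine ⟨homInf k I, fun hzero => ?_⟩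
    have h1 := homInf_psi_one k I
    rw [hzero] at h1
    exact one_ne_zero (α := k) h1.symm
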